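/- Let R be a commutative domain, let f₁,…,f_k, g be elements of R forming a regular sequence (in every order), let I be the ideal of R generated by f₁,…,f_k, and let δ be a derivation on R which maps the subring R[f₁/g,…,f_k/g] of the fraction field of R into itself. Then δ(I) ⊆ I + Rg. -/

import Mathlib

/-- Let `R` be a commutative domain with fraction field `K`, let
`f₁,…,f_k, g` form a regular sequence in every order, let `I = (f₁,…,f_k)R`, and let
`δ` be a derivation of `K` mapping (the image of) `R` into itself and mapping the
subring `R[f₁/g,…,f_k/g] ⊆ K` into itself.  Then `δ(I) ⊆ I + Rg`. -/
theorem stmt_1 {R : Type*} [CommRing R] [IsDomain R] {k : ℕ} (f : Fin k → R) (g : R)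
    (hreg : ∀ l : List R, l.Perm (List.ofFn f ++ [g]) →
      RingTheory.Sequence.IsRegular R l)
    (δ : Derivation ℤ (FractionRing R) (FractionRing R))
    (hR : ∀ r : R, δ (algebraMap R (FractionRing R) r) ∈ (algebraMap R (FractionRing R)).range)
    (hA : ∀ x ∈ Algebra.adjoin R
        (Set.range fun i => algebraMap R (FractionRing R) (f i) / algebraMap R (FractionRing R) g),
      δ x ∈ Algebra.adjoin R
        (Set.range fun i => algebraMap R (FractionRing R) (f i) / algebraMap R (FractionRing R) g)) :
    ∀ x ∈ Ideal.span (Set.range f),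
      ∃ y ∈ Ideal.span (Set.range f) ⊔ Ideal.span {g},
        δ (algebraMap R (FractionRing R) x) = algebraMap R (FractionRing R) y := by
  set K := FractionRing R
  set φ := algebraMap R K with hφdef
  have hφ : Function.Injective φ := IsFractionRing.injective R K
  set I : Ideal R := Ideal.span (Set.range f) with hIdef
  -- g is regular mod I
  have hgreg : IsSMulRegular (R ⧸ (Ideal.span (Set.range f) • ⊤ : Submodule R R)) g := by
    have hreg' := hreg _ (List.Perm.refl _)
    have hlen : k < (List.ofFn f ++ [g]).length := by simp
    have h1 := hreg'.toIsWeaklyRegular.regular_mod_prev k hlen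
    have htake : (List.ofFn f ++ [g]).take k = List.ofFn f :=
      List.take_left' List.length_ofFn
    have hgel : (List.ofFn f ++ [g])[k]'hlen = g := by
      rw [List.getElem_append_right (by simp)]
      simp
    have hs : Ideal.ofList (List.ofFn f) = Ideal.span (Set.range f) := by
      show Ideal.span _ = _
      congr 1
      ext x; simp [List.mem_ofFn]
    rw [htake, hgel, hs] at h1
    exact h1
  have hIT : (Ideal.span (Set.range f) • ⊤ : Submodule R R) = Ideal.span (Set.range f) := by
    rw [smul_eq_mul, Ideal.mul_top]
  have hquot : ∀ (n : ℕ) (x : R), g ^ n * x ∈ I → x ∈ I := by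
    intro n x hx
    have h2 := hgreg.pow n
    have h3 : (g ^ n) • (Submodule.Quotient.mk x :
          R ⧸ (Ideal.span (Set.range f) • ⊤ : Submodule R R))
        = (g ^ n) • (0 : R ⧸ (Ideal.span (Set.range f) • ⊤ : Submodule R R)) := by
      rw [smul_zero, ← Submodule.Quotient.mk_smul, Submodule.Quotient.mk_eq_zero, hIT]
      exact (by simpa [smul_eq_mul] using hx : g ^ n * x ∈ Ideal.span (Set.range f))
    have h4 := h2 h3
    rw [Submodule.Quotient.mk_eq_zero, hIT] at h4
    exact h4
  -- I is proper and g ≠ 0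
  have hItop : I ≠ ⊤ := by
    intro htop
    have hreg' := hreg _ (List.Perm.refl _)
    apply hreg'.top_ne_smul
    have : Ideal.ofList (List.ofFn f ++ [g]) = ⊤ := by
      rw [eq_top_iff, ← htop, hIdef]
      refine Ideal.span_le.2 ?_
      rintro x ⟨i, rfl⟩
      exact Ideal.subset_span (by simp [List.mem_ofFn])
    rw [this]; simp
  have hg0 : φ g ≠ 0 := by
    intro h0
    have hg0' : g = 0 := hφ (by simpa using h0)
    exact hItop (Ideal.eq_top_of_isUnit_mem _ (hquot 1 1 (by simp [hg0'])) isUnit_one)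
  -- clearing denominators on A
  set A := Algebra.adjoin R
      (Set.range fun i => φ (f i) / φ g) with hAdef
  have hstep : ∀ (N : ℕ) (c : R), c ∈ I ⊔ Ideal.span {g ^ N} →
      g * c ∈ I ⊔ Ideal.span {g ^ (N + 1)} := by
    intro N c hc
    obtain ⟨c₁, hc₁, c₂, hc₂, rfl⟩ := Submodule.mem_sup.1 hc
    obtain ⟨r, hr⟩ := Ideal.mem_span_singleton'.1 hc₂
    refine Submodule.mem_sup.2 ⟨g * c₁, I.mul_mem_left g hc₁, r * g ^ (N + 1),
      Ideal.mem_span_singleton'.2 ⟨r, rfl⟩, ?_⟩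
    rw [← hr]; ring
  have hraise : ∀ (N M : ℕ), N ≤ M → ∀ (a : K) (c : R),
      c ∈ I ⊔ Ideal.span {g ^ N} → φ g ^ N * a = φ c →
      ∃ c', c' ∈ I ⊔ Ideal.span {g ^ M} ∧ φ g ^ M * a = φ c' := by
    intro N M hNM
    induction M, hNM using Nat.le_induction with
    | base => exact fun a c hc h => ⟨c, hc, h⟩
    | succ M hM ih =>
      intro a c hc h
      obtain ⟨c', hc', h'⟩ := ih a c hc h
      refine ⟨g * c', hstep M c' hc', ?_⟩
      rw [map_mul, ← h', pow_succ]; ring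
  have hclear : ∀ a ∈ A, ∃ (N : ℕ) (c : R),
      c ∈ I ⊔ Ideal.span {g ^ N} ∧ φ g ^ N * a = φ c := by
    intro a ha
    induction ha using Algebra.adjoin_induction with
    | mem x hx =>
      obtain ⟨i, rfl⟩ := hx
      refine ⟨1, f i, Submodule.mem_sup_left (Ideal.subset_span ⟨i, rfl⟩), ?_⟩
      rw [pow_one, mul_div_cancel₀ _ hg0]
    | algebraMap r =>
      refine ⟨0, r, ?_, by simp [hφdef]⟩
      refine Submodule.mem_sup_right ?_
      simp [Ideal.span_singleton_one]
    | add x y hx hy ihx ihy =>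
      obtain ⟨N₁, c₁, hc₁, h₁⟩ := ihx
      obtain ⟨N₂, c₂, hc₂, h₂⟩ := ihy
      obtain ⟨c₁', hc₁', h₁'⟩ := hraise N₁ (max N₁ N₂) (le_max_left _ _) x c₁ hc₁ h₁
      obtain ⟨c₂', hc₂', h₂'⟩ := hraise N₂ (max N₁ N₂) (le_max_right _ _) y c₂ hc₂ h₂
      exact ⟨max N₁ N₂, c₁' + c₂', Submodule.add_mem _ hc₁' hc₂',
        by rw [mul_add, h₁', h₂', map_add]⟩
    | mul x y hx hy ihx ihy =>
      obtain ⟨N₁, c₁, hc₁, h₁⟩ := ihx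
      obtain ⟨N₂, c₂, hc₂, h₂⟩ := ihy
      refine ⟨N₁ + N₂, c₁ * c₂, ?_, ?_⟩
      · obtain ⟨a₁, ha₁, b₁, hb₁, rfl⟩ := Submodule.mem_sup.1 hc₁
        obtain ⟨a₂, ha₂, b₂, hb₂, rfl⟩ := Submodule.mem_sup.1 hc₂
        obtain ⟨r₁, hr₁⟩ := Ideal.mem_span_singleton'.1 hb₁
        obtain ⟨r₂, hr₂⟩ := Ideal.mem_span_singleton'.1 hb₂
        refine Submodule.mem_sup.2 ⟨a₁ * (a₂ + b₂) + b₁ * a₂,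
          I.add_mem (I.mul_mem_right _ ha₁) (I.mul_mem_left _ ha₂),
          r₁ * r₂ * g ^ (N₁ + N₂), Ideal.mem_span_singleton'.2 ⟨r₁ * r₂, rfl⟩, ?_⟩
        rw [← hr₁, ← hr₂]; ring
      · rw [pow_add, map_mul, ← h₁, ← h₂]; ring
  -- the generator case
  have hgen : ∀ i : Fin k, ∃ y ∈ I ⊔ Ideal.span {g}, δ (φ (f i)) = φ y := by
    intro i
    have hfg : φ (f i) / φ g ∈ A := Algebra.subset_adjoin ⟨i, rfl⟩
    have ha : δ (φ (f i) / φ g) ∈ A := hA _ hfg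
    obtain ⟨N, c, hc, hφc⟩ := hclear _ ha
    obtain ⟨d, hd⟩ := hR (f i)
    obtain ⟨e, he⟩ := hR g
    -- φ g ^ 2 * δ(f i / g) = φ g * φ d - φ (f i) * φ e
    have key : φ g ^ 2 * δ (φ (f i) / φ g) = φ g * φ d - φ (f i) * φ e := by
      rw [Derivation.leibniz_div, smul_sub, smul_smul, smul_smul]
      rw [smul_eq_mul, smul_eq_mul]
      rw [hd, he]
      field_simp
      rw [mul_div_cancel₀ _ (pow_ne_zero 2 hg0)]
    -- transfer to R
    have main : g ^ (N + 1) * d - g ^ N * (f i * e) = g ^ 2 * c := by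
      apply hφ
      rw [map_sub, map_mul, map_mul, map_mul, map_pow, map_pow, map_mul, map_pow]
      calc φ g ^ (N + 1) * φ d - φ g ^ N * (φ (f i) * φ e)
          = φ g ^ N * (φ g * φ d - φ (f i) * φ e) := by ring
        _ = φ g ^ N * (φ g ^ 2 * δ (φ (f i) / φ g)) := by rw [key]
        _ = φ g ^ 2 * (φ g ^ N * δ (φ (f i) / φ g)) := by ring
        _ = φ g ^ 2 * φ c := by rw [hφc]
    obtain ⟨c₁, hc₁, c₂, hc₂, hcsum⟩ := Submodule.mem_sup.1 hc
    obtain ⟨r₀, hr₀⟩ := Ideal.mem_span_singleton'.1 hc₂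
    have main2 : g ^ (N + 1) * (d - r₀ * g) = g ^ N * (f i * e) + g ^ 2 * c₁ := by
      have : c = c₁ + r₀ * g ^ N := by rw [hr₀]; exact hcsum.symm
      rw [this] at main
      linear_combination main
    have hdmem : d - r₀ * g ∈ I := by
      apply hquot (N + 1)
      rw [main2]
      exact I.add_mem (I.mul_mem_left _ (I.mul_mem_right e (Ideal.subset_span ⟨i, rfl⟩)))
        (I.mul_mem_left _ hc₁)
    refine ⟨d, ?_, hd.symm⟩
    have : d = (d - r₀ * g) + r₀ * g := by ring
    rw [this]
    exact Submodule.add_mem _ (Submodule.mem_sup_left hdmem)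
      (Submodule.mem_sup_right (Ideal.mem_span_singleton'.2 ⟨r₀, rfl⟩))
  -- final induction over the span
  intro x hx
  induction hx using Submodule.span_induction with
  | mem x hx =>
    obtain ⟨i, rfl⟩ := hx
    exact hgen i
  | zero => exact ⟨0, Submodule.zero_mem _, by simp⟩
  | add x y hx hy ihx ihy =>
    obtain ⟨y₁, hy₁, e₁⟩ := ihx
    obtain ⟨y₂, hy₂, e₂⟩ := ihy
    exact ⟨y₁ + y₂, Submodule.add_mem _ hy₁ hy₂, by rw [map_add, map_add, e₁, e₂, map_add]⟩
  | smul r x hx ih =>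
    obtain ⟨y, hy, ey⟩ := ih
    obtain ⟨e, he⟩ := hR r
    refine ⟨r * y + x * e, ?_, ?_⟩
    · refine Submodule.add_mem _ ((I ⊔ Ideal.span {g}).mul_mem_left r hy)
        ((I ⊔ Ideal.span {g}).mul_mem_right e (Submodule.mem_sup_left hx))
    · rw [smul_eq_mul, map_mul, Derivation.leibniz, ey, ← he, smul_eq_mul, smul_eq_mul,
        map_add, map_mul, map_mul]
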